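/- Let X, S : Polynomial ℂ with X ≠ 0 and X.coeff 0 ≠ 0. If S is self-reciprocal with respect to natDegree S and S divides X, then S also divides X⋆[natDegree X]. (Every self-reciprocal factor of X is a common factor of X and its conjugate-reciprocal.) -/
import Mathlib

/-- The conjugate-reciprocal of `P` with respect to `N`:
its `k`-th coefficient is `conj (P.coeff (N - k))` for `k ≤ N`. -/
noncomputable def creflect (N : ℕ) (P : Polynomial ℂ) : Polynomial ℂ :=
  Polynomial.reflect N (P.map (starRingEnd ℂ))

/-- Every self-reciprocal factor of `X` is a common factor of `X` and its
conjugate-reciprocal. -/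
theorem selfReciprocal_factor_dvd_creflect (X S : Polynomial ℂ)
    (hX : X ≠ 0) (h0 : X.coeff 0 ≠ 0)
    (hS : creflect S.natDegree S = S) (hdvd : S ∣ X) :
    S ∣ creflect X.natDegree X := by
  obtain ⟨Q, rfl⟩ := hdvd
  have hS0 : S ≠ 0 := fun h => hX (by simp [h])
  have hQ0 : Q ≠ 0 := fun h => hX (by simp [h])
  have hdeg : (S * Q).natDegree = S.natDegree + Q.natDegree :=
    Polynomial.natDegree_mul hS0 hQ0
  refine ⟨creflect Q.natDegree Q, ?_⟩
  rw [creflect, hdeg, Polynomial.map_mul,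
    Polynomial.reflect_mul _ _ Polynomial.natDegree_map_le
      Polynomial.natDegree_map_le]
  rw [← creflect, ← creflect, hS]
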